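/- Let X be a Banach space and Y a closed subspace. Then Sz(Y) ≤ Sz(X) and Sz(X/Y) ≤ Sz(X), and moreover Sz(X) ≤ Sz(X/Y)·Sz(Y). Consequently, for any ordinal ξ, the properties Sz(·) < ω^{ω^ξ} and Sz(·) ≤ ω^{ω^ξ} are three-space properties: if Y and X/Y both have the property, so does X. -/

import Mathlib

open NormedSpace

noncomputable def derivIter {α : Type*} (d : Set α → Set α) (K : Set α) : Ordinal → Set α :=
  fun ξ => Ordinal.limitRecOn ξ K (fun _ ih => d ih)
    (fun o _ ih => ⋂ ζ : Set.Iio o, ih ζ.1 ζ.2)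

/-- The Szlenk slicing derivation: `s_ε(K)` removes from `K` every point contained in
a `w*`-open set whose intersection with `K` has norm diameter at most `ε`. -/
def szSlice {X : Type*} [NormedAddCommGroup X] [NormedSpace ℝ X] (ε : ℝ)
    (K : Set (StrongDual ℝ X)) : Set (StrongDual ℝ X) :=
  {f ∈ K | ∀ W : Set (WeakDual ℝ X), IsOpen W → StrongDual.toWeakDual f ∈ W →
    ε < Metric.diam (K ∩ (fun g => StrongDual.toWeakDual g) ⁻¹' W)}

/-- `Sz(Z) > ζ` for a Banach space `Z`. -/
def SzSpGt (Z : Type*) [NormedAddCommGroup Z] [NormedSpace ℝ Z] (ζ : Ordinal) : Prop :=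
  ∃ ε : ℝ, 0 < ε ∧
    (derivIter (szSlice ε) (Metric.closedBall (0 : StrongDual ℝ Z) 1) ζ).Nonempty

/-- `Sz(Z) ≤ γ` for a Banach space `Z`. -/
def SzSpLe (Z : Type*) [NormedAddCommGroup Z] [NormedSpace ℝ Z] (γ : Ordinal) : Prop :=
  ∀ ε : ℝ, 0 < ε → derivIter (szSlice ε) (Metric.closedBall (0 : StrongDual ℝ Z) 1) γ = ∅

open Metric Set Pointwise Bornology

section DerivIter

variable {α : Type*} {d d₁ d₂ : Set α → Set α} {K K₁ K₂ G : Set α}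

theorem derivIter_zero (d : Set α → Set α) (K : Set α) : derivIter d K 0 = K :=
  Ordinal.limitRecOn_zero ..

theorem derivIter_succ (d : Set α → Set α) (K : Set α) (ξ : Ordinal) :
    derivIter d K (ξ + 1) = d (derivIter d K ξ) :=
  Ordinal.limitRecOn_add_one ..

theorem derivIter_limit (d : Set α → Set α) (K : Set α) {ξ : Ordinal} (h : Order.IsSuccLimit ξ) :
    derivIter d K ξ = ⋂ ζ : Set.Iio ξ, derivIter d K ζ.1 :=
  Ordinal.limitRecOn_limit _ _ _ _ h

theorem derivIter_subset (hd : ∀ A : Set α, d A ⊆ A) (K : Set α) :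
    ∀ γ : Ordinal, derivIter d K γ ⊆ K := by
  intro γ
  induction γ using Ordinal.limitRecOn with
  | zero => rw [derivIter_zero]
  | add_one ξ ih => rw [derivIter_succ]; exact (hd _).trans ih
  | limit ξ hξ ih =>
    rw [derivIter_limit _ _ hξ]
    exact (iInter_subset _ ⟨0, hξ.pos⟩).trans (ih 0 hξ.pos)

theorem derivIter_antitone (hd : ∀ A : Set α, d A ⊆ A) (K : Set α) {γ γ' : Ordinal}
    (h : γ ≤ γ') : derivIter d K γ' ⊆ derivIter d K γ := by
  induction γ' using Ordinal.limitRecOn with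
  | zero => rw [nonpos_iff_eq_zero] at h; subst h; exact le_rfl
  | add_one ξ ih =>
    rcases Order.le_succ_iff_eq_or_le.1 (by rwa [Ordinal.add_one_eq_succ] at h) with rfl | h'
    · exact le_rfl
    · rw [derivIter_succ]; exact (hd _).trans (ih h')
  | limit ξ hξ ih =>
    rcases eq_or_lt_of_le h with rfl | h'
    · exact le_rfl
    · rw [derivIter_limit _ _ hξ]
      exact iInter_subset (fun ζ : Set.Iio ξ => derivIter d K ζ.1) ⟨γ, h'⟩

theorem derivIter_le_general (hd₂ : ∀ A : Set α, d₂ A ⊆ A)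
    (h : ∀ A B : Set α, A ⊆ B → B ⊆ G → d₁ A ⊆ d₂ B) (hK : K₁ ⊆ K₂) (hG : K₂ ⊆ G) :
    ∀ γ : Ordinal, derivIter d₁ K₁ γ ⊆ derivIter d₂ K₂ γ := by
  intro γ
  induction γ using Ordinal.limitRecOn with
  | zero => rw [derivIter_zero, derivIter_zero]; exact hK
  | add_one ξ ih =>
    rw [derivIter_succ, derivIter_succ]
    exact h _ _ ih ((derivIter_subset hd₂ _ _).trans hG)
  | limit ξ hξ ih =>
    rw [derivIter_limit _ _ hξ, derivIter_limit _ _ hξ]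
    exact iInter_mono fun ζ => ih ζ.1 ζ.2

theorem derivIter_add (hd : ∀ A : Set α, d A ⊆ A) (K : Set α) (a b : Ordinal) :
    derivIter d K (a + b) = derivIter d (derivIter d K a) b := by
  induction b using Ordinal.limitRecOn with
  | zero => rw [add_zero, derivIter_zero]
  | add_one ξ ih => rw [← add_assoc, derivIter_succ, derivIter_succ, ih]
  | limit ξ hξ ih =>
    rw [derivIter_limit _ _ hξ, derivIter_limit _ _ (Ordinal.isSuccLimit_add a hξ)]
    apply Set.Subset.antisymm
    · apply subset_iInter
      rintro ⟨ζ, hζ⟩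
      rw [← ih ζ hζ]
      exact iInter_subset (fun ζ' : Set.Iio (a + ξ) => derivIter d K ζ'.1)
        ⟨a + ζ, (add_lt_add_iff_left a).2 hζ⟩
    · apply subset_iInter
      rintro ⟨ζ, hζ⟩
      have h1 : ζ - a < ξ := Ordinal.sub_lt_of_lt_add hζ hξ.pos
      have h2 : ζ ≤ a + (ζ - a) := Ordinal.le_add_sub ζ a
      refine Subset.trans (iInter_subset _ ⟨ζ - a, h1⟩) ?_
      rw [← ih _ h1]
      exact derivIter_antitone hd K h2

end DerivIter


section Weak

variable {E : Type*} [NormedAddCommGroup E] [NormedSpace ℝ E]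

/-- `U` is weak-star open. -/
def wop (U : Set (StrongDual ℝ E)) : Prop :=
  ∃ W : Set (WeakDual ℝ E), IsOpen W ∧ U = (fun g => StrongDual.toWeakDual g) ⁻¹' W

/-- `C` is weak-star closed. -/
def wcl (C : Set (StrongDual ℝ E)) : Prop :=
  ∃ W : Set (WeakDual ℝ E), IsClosed W ∧ C = (fun g => StrongDual.toWeakDual g) ⁻¹' W

/-- `K` is weak-star compact. -/
def wcpt (K : Set (StrongDual ℝ E)) : Prop :=
  IsCompact ((fun g => StrongDual.toWeakDual g) '' K)

theorem tw_injective : Function.Injective (fun g : StrongDual ℝ E => StrongDual.toWeakDual g) :=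
  StrongDual.toWeakDual.injective

theorem tw_surjective : Function.Surjective (fun g : StrongDual ℝ E => StrongDual.toWeakDual g) :=
  StrongDual.toWeakDual.surjective

theorem tw_preimage_image (S : Set (StrongDual ℝ E)) :
    (fun g : StrongDual ℝ E => StrongDual.toWeakDual g) ⁻¹' ((fun g => StrongDual.toWeakDual g) '' S) = S :=
  Set.preimage_image_eq S tw_injective

theorem tw_image_preimage (W : Set (WeakDual ℝ E)) :
    (fun g : StrongDual ℝ E => StrongDual.toWeakDual g) '' ((fun g => StrongDual.toWeakDual g) ⁻¹' W) = W :=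
  Set.image_preimage_eq W tw_surjective

theorem wop_univ : wop (Set.univ : Set (StrongDual ℝ E)) := ⟨Set.univ, isOpen_univ, rfl⟩

theorem wop_inter {U V : Set (StrongDual ℝ E)} (hU : wop U) (hV : wop V) : wop (U ∩ V) := by
  obtain ⟨W, hW, rfl⟩ := hU; obtain ⟨W', hW', rfl⟩ := hV
  exact ⟨W ∩ W', hW.inter hW', rfl⟩

theorem wop_iUnion {ι : Sort*} {U : ι → Set (StrongDual ℝ E)} (h : ∀ i, wop (U i)) :
    wop (⋃ i, U i) := by
  choose W hW hUW using h
  refine ⟨⋃ i, W i, isOpen_iUnion hW, ?_⟩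
  rw [Set.preimage_iUnion]
  exact Set.iUnion_congr hUW

theorem wop_compl_of_wcl {C : Set (StrongDual ℝ E)} (h : wcl C) : wop Cᶜ := by
  obtain ⟨W, hW, rfl⟩ := h
  exact ⟨Wᶜ, hW.isOpen_compl, rfl⟩

theorem wcl_compl_of_wop {U : Set (StrongDual ℝ E)} (h : wop U) : wcl Uᶜ := by
  obtain ⟨W, hW, rfl⟩ := h
  exact ⟨Wᶜ, hW.isClosed_compl, rfl⟩

theorem wcl_of_wcpt {K : Set (StrongDual ℝ E)} (h : wcpt K) : wcl K :=
  ⟨(fun g => StrongDual.toWeakDual g) '' K, h.isClosed, (tw_preimage_image K).symm⟩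

theorem wcl_singleton (f : StrongDual ℝ E) : wcl ({f} : Set (StrongDual ℝ E)) :=
  ⟨{StrongDual.toWeakDual f}, isClosed_singleton, by
    ext g; simp [tw_injective.eq_iff]⟩

theorem wcpt.inter_wcl {K C : Set (StrongDual ℝ E)} (hK : wcpt K) (hC : wcl C) : wcpt (K ∩ C) := by
  obtain ⟨W, hW, rfl⟩ := hC
  have : (fun g : StrongDual ℝ E => StrongDual.toWeakDual g) '' (K ∩ (fun g => StrongDual.toWeakDual g) ⁻¹' W)
      = ((fun g : StrongDual ℝ E => StrongDual.toWeakDual g) '' K) ∩ W := Set.image_inter_preimage _ _ _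
  unfold wcpt
  rw [this]
  exact hK.inter_right hW

theorem wcpt.diff_wop {K U : Set (StrongDual ℝ E)} (hK : wcpt K) (hU : wop U) : wcpt (K \ U) :=
  hK.inter_wcl (wcl_compl_of_wop hU)

theorem wcpt_closedBall (f : StrongDual ℝ E) (r : ℝ) : wcpt (Metric.closedBall f r) := by
  have : (fun g : StrongDual ℝ E => StrongDual.toWeakDual g) '' Metric.closedBall f r
      = WeakDual.toStrongDual ⁻¹' Metric.closedBall f r := by
    ext x
    constructor
    · rintro ⟨g, hg, rfl⟩; exact hg
    · intro hx; exact ⟨WeakDual.toStrongDual x, hx, rfl⟩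
  unfold wcpt
  rw [this]
  exact WeakDual.isCompact_closedBall (𝕜 := ℝ) f r

theorem wcpt.add {K L : Set (StrongDual ℝ E)} (hK : wcpt K) (hL : wcpt L) : wcpt (K + L) := by
  have : (fun g : StrongDual ℝ E => StrongDual.toWeakDual g) '' (K + L)
      = ((fun g : StrongDual ℝ E => StrongDual.toWeakDual g) '' K) +
        ((fun g : StrongDual ℝ E => StrongDual.toWeakDual g) '' L) := by
    ext x
    simp only [Set.mem_add, Set.mem_image]
    constructor
    · rintro ⟨a, ⟨u, hu, v, hv, rfl⟩, rfl⟩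
      exact ⟨_, ⟨u, hu, rfl⟩, _, ⟨v, hv, rfl⟩, (map_add StrongDual.toWeakDual u v).symm⟩
    · rintro ⟨a, ⟨u, hu, rfl⟩, b, ⟨v, hv, rfl⟩, rfl⟩
      exact ⟨u + v, ⟨u, hu, v, hv, rfl⟩, map_add StrongDual.toWeakDual u v⟩
  unfold wcpt
  rw [this]
  exact IsCompact.add hK hL

theorem wcpt_iInter {ι : Sort*} [Nonempty ι] {A : ι → Set (StrongDual ℝ E)}
    (h : ∀ i, wcpt (A i)) : wcpt (⋂ i, A i) := by
  have him : (fun g : StrongDual ℝ E => StrongDual.toWeakDual g) '' (⋂ i, A i)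
      = ⋂ i, (fun g : StrongDual ℝ E => StrongDual.toWeakDual g) '' A i :=
    Set.image_iInter ⟨tw_injective, tw_surjective⟩ A
  unfold wcpt
  rw [him]
  exact IsCompact.of_isClosed_subset (h (Classical.arbitrary _))
    (isClosed_iInter fun i => (h i).isClosed) (Set.iInter_subset _ _)

theorem wcpt_iInter_nonempty {ι : Type*} [Nonempty ι] {A : ι → Set (StrongDual ℝ E)}
    (hdir : Directed (· ⊇ ·) A) (hcp : ∀ i, wcpt (A i)) (hne : ∀ i, (A i).Nonempty) :
    (⋂ i, A i).Nonempty := by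
  have him : (fun g : StrongDual ℝ E => StrongDual.toWeakDual g) '' (⋂ i, A i)
      = ⋂ i, (fun g : StrongDual ℝ E => StrongDual.toWeakDual g) '' A i :=
    Set.image_iInter ⟨tw_injective, tw_surjective⟩ A
  have h2 : (⋂ i, (fun g : StrongDual ℝ E => StrongDual.toWeakDual g) '' A i).Nonempty := by
    apply IsCompact.nonempty_iInter_of_directed_nonempty_isCompact_isClosed
    · intro i j
      obtain ⟨k, hki, hkj⟩ := hdir i j
      exact ⟨k, Set.image_mono hki, Set.image_mono hkj⟩
    · exact fun i => (hne i).image _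
    · exact fun i => hcp i
    · exact fun i => (hcp i).isClosed
  rw [← him] at h2
  exact h2.of_image

end Weak


section Generic
variable {E F : Type*} [NormedAddCommGroup E] [NormedSpace ℝ E]
  [NormedAddCommGroup F] [NormedSpace ℝ F]

def mSlice (m : StrongDual ℝ E → StrongDual ℝ F) (ε : ℝ) (K : Set (StrongDual ℝ E)) : Set (StrongDual ℝ E) :=
  {f ∈ K | ∀ U : Set (StrongDual ℝ E), wop U → f ∈ U → ε < Metric.diam (m '' (K ∩ U))}

def wcont (m : StrongDual ℝ E → StrongDual ℝ F) : Prop :=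
  Continuous fun g : WeakDual ℝ E => StrongDual.toWeakDual (m (WeakDual.toStrongDual g))

theorem mem_szSlice_iff {ε : ℝ} {K : Set (StrongDual ℝ E)} {f : StrongDual ℝ E} :
    f ∈ szSlice ε K ↔ f ∈ K ∧ ∀ U, wop U → f ∈ U → ε < Metric.diam (K ∩ U) := by
  constructor
  · rintro ⟨hf, h⟩
    refine ⟨hf, ?_⟩
    rintro U ⟨W, hW, rfl⟩ hfU
    exact h W hW hfU
  · rintro ⟨hf, h⟩
    exact ⟨hf, fun W hW hfW => h _ ⟨W, hW, rfl⟩ hfW⟩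

theorem szSlice_subset (ε : ℝ) (K : Set (StrongDual ℝ E)) : szSlice ε K ⊆ K :=
  fun _ hf => hf.1

theorem mSlice_subset (m : StrongDual ℝ E → StrongDual ℝ F) (ε : ℝ) (K : Set (StrongDual ℝ E)) :
    mSlice m ε K ⊆ K := fun _ hf => hf.1

theorem szSlice_le {θ Θ : ℝ} (hθ : θ ≤ Θ) {G : Set (StrongDual ℝ E)} (hG : Bornology.IsBounded G)
    {A B : Set (StrongDual ℝ E)} (hAB : A ⊆ B) (hBG : B ⊆ G) : szSlice Θ A ⊆ szSlice θ B := by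
  intro f hf
  rw [mem_szSlice_iff] at hf ⊢
  refine ⟨hAB hf.1, fun U hU hfU => ?_⟩
  calc θ ≤ Θ := hθ
  _ < Metric.diam (A ∩ U) := hf.2 U hU hfU
  _ ≤ Metric.diam (B ∩ U) := Metric.diam_mono (Set.inter_subset_inter_left U hAB)
      (hG.subset ((Set.inter_subset_left).trans hBG))

theorem mSlice_le {m : StrongDual ℝ E → StrongDual ℝ F} {θ Θ : ℝ} (hθ : θ ≤ Θ) {G : Set (StrongDual ℝ E)}
    (hG : Bornology.IsBounded (m '' G)) {A B : Set (StrongDual ℝ E)} (hAB : A ⊆ B) (hBG : B ⊆ G) :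
    mSlice m Θ A ⊆ mSlice m θ B := by
  rintro f ⟨hf, h⟩
  refine ⟨hAB hf, fun U hU hfU => ?_⟩
  calc θ ≤ Θ := hθ
  _ < Metric.diam (m '' (A ∩ U)) := h U hU hfU
  _ ≤ Metric.diam (m '' (B ∩ U)) := Metric.diam_mono
      (Set.image_mono (Set.inter_subset_inter_left U hAB))
      (hG.subset (Set.image_mono ((Set.inter_subset_left).trans hBG)))

theorem mSlice_le_szSlice {m : StrongDual ℝ E → StrongDual ℝ F} {θ Θ : ℝ} (hθ : θ ≤ Θ)
    (hlip : ∀ a b : StrongDual ℝ E, dist (m a) (m b) ≤ dist a b)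
    {G : Set (StrongDual ℝ E)} (hG : Bornology.IsBounded G) {A B : Set (StrongDual ℝ E)} (hAB : A ⊆ B) (hBG : B ⊆ G) :
    mSlice m Θ A ⊆ szSlice θ B := by
  rintro f ⟨hf, h⟩
  rw [mem_szSlice_iff]
  refine ⟨hAB hf, fun U hU hfU => ?_⟩
  have hbdd : Bornology.IsBounded (A ∩ U) := hG.subset ((Set.inter_subset_left.trans hAB).trans hBG)
  calc θ ≤ Θ := hθ
  _ < Metric.diam (m '' (A ∩ U)) := h U hU hfU
  _ ≤ Metric.diam (A ∩ U) := by
      apply Metric.diam_le_of_forall_dist_le Metric.diam_nonneg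
      rintro x ⟨a, ha, rfl⟩ y ⟨b, hb, rfl⟩
      exact (hlip a b).trans (Metric.dist_le_diam_of_mem hbdd ha hb)
  _ ≤ Metric.diam (B ∩ U) := Metric.diam_mono (Set.inter_subset_inter_left U hAB)
      (hG.subset (Set.inter_subset_left.trans hBG))

theorem szSlice_eq_diff (ε : ℝ) (K : Set (StrongDual ℝ E)) :
    szSlice ε K = K \ (⋃ U : {U : Set (StrongDual ℝ E) // wop U ∧ Metric.diam (K ∩ U) ≤ ε}, U.1) := by
  ext f
  rw [mem_szSlice_iff]
  simp only [Set.mem_diff, Set.mem_iUnion]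
  constructor
  · rintro ⟨hf, h⟩
    refine ⟨hf, ?_⟩
    rintro ⟨⟨U, hU, hd⟩, hfU⟩
    exact absurd (h U hU hfU) (not_lt.2 hd)
  · rintro ⟨hf, h⟩
    refine ⟨hf, fun U hU hfU => ?_⟩
    by_contra hle
    exact h ⟨⟨U, hU, not_lt.1 hle⟩, hfU⟩

theorem wcpt_szSlice {ε : ℝ} {K : Set (StrongDual ℝ E)} (hK : wcpt K) : wcpt (szSlice ε K) := by
  rw [szSlice_eq_diff]
  exact hK.diff_wop (wop_iUnion fun U => U.2.1)

theorem mSlice_eq_diff (m : StrongDual ℝ E → StrongDual ℝ F) (ε : ℝ) (K : Set (StrongDual ℝ E)) :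
    mSlice m ε K = K \
      (⋃ U : {U : Set (StrongDual ℝ E) // wop U ∧ Metric.diam (m '' (K ∩ U)) ≤ ε}, U.1) := by
  ext f
  simp only [mSlice, Set.mem_setOf_eq, Set.mem_diff, Set.mem_iUnion]
  constructor
  · rintro ⟨hf, h⟩
    refine ⟨hf, ?_⟩
    rintro ⟨⟨U, hU, hd⟩, hfU⟩
    exact absurd (h U hU hfU) (not_lt.2 hd)
  · rintro ⟨hf, h⟩
    refine ⟨hf, fun U hU hfU => ?_⟩
    by_contra hle
    exact h ⟨⟨U, hU, not_lt.1 hle⟩, hfU⟩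

theorem wcpt_mSlice {m : StrongDual ℝ E → StrongDual ℝ F} {ε : ℝ} {K : Set (StrongDual ℝ E)} (hK : wcpt K) :
    wcpt (mSlice m ε K) := by
  rw [mSlice_eq_diff]
  exact hK.diff_wop (wop_iUnion fun U => U.2.1)

theorem wcont.preimage_wop {m : StrongDual ℝ E → StrongDual ℝ F} (hm : wcont m) {V : Set (StrongDual ℝ F)}
    (hV : wop V) : wop (m ⁻¹' V) := by
  obtain ⟨W, hW, rfl⟩ := hV
  refine ⟨_, hW.preimage hm, ?_⟩
  rfl

theorem wcont.preimage_wcl {m : StrongDual ℝ E → StrongDual ℝ F} (hm : wcont m) {C : Set (StrongDual ℝ F)}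
    (hC : wcl C) : wcl (m ⁻¹' C) := by
  obtain ⟨W, hW, rfl⟩ := hC
  refine ⟨_, hW.preimage hm, ?_⟩
  rfl

theorem wcont.image_wcpt {m : StrongDual ℝ E → StrongDual ℝ F} (hm : wcont m) {K : Set (StrongDual ℝ E)}
    (hK : wcpt K) : wcpt (m '' K) := by
  have : (fun g : StrongDual ℝ F => StrongDual.toWeakDual g) '' (m '' K)
      = (fun g : WeakDual ℝ E => StrongDual.toWeakDual (m (WeakDual.toStrongDual g))) ''
        ((fun g : StrongDual ℝ E => StrongDual.toWeakDual g) '' K) := by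
    rw [Set.image_image, Set.image_image]
    rfl
  unfold wcpt
  rw [this]
  exact hK.image hm

theorem isBounded_image_of_scale {m : StrongDual ℝ E → StrongDual ℝ F} {c : ℝ} (hc : 0 < c)
    (hdist : ∀ a b, dist (m a) (m b) = c * dist a b) {S : Set (StrongDual ℝ E)}
    (hS : IsBounded S) : IsBounded (m '' S) := by
  rw [Metric.isBounded_iff] at hS ⊢
  obtain ⟨C, hC⟩ := hS
  refine ⟨c * C, ?_⟩
  rintro x ⟨a, ha, rfl⟩ y ⟨b, hb, rfl⟩
  rw [hdist a b]
  exact mul_le_mul_of_nonneg_left (hC ha hb) hc.le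

theorem diam_image_of_scale {m : StrongDual ℝ E → StrongDual ℝ F} {c : ℝ} (hc : 0 < c)
    (hdist : ∀ a b, dist (m a) (m b) = c * dist a b) {S : Set (StrongDual ℝ E)}
    (hS : IsBounded S) : Metric.diam (m '' S) = c * Metric.diam S := by
  apply le_antisymm
  · apply Metric.diam_le_of_forall_dist_le (mul_nonneg hc.le Metric.diam_nonneg)
    rintro x ⟨a, ha, rfl⟩ y ⟨b, hb, rfl⟩
    rw [hdist a b]
    exact mul_le_mul_of_nonneg_left (Metric.dist_le_diam_of_mem hS ha hb) hc.le
  · have h1 : Metric.diam S ≤ Metric.diam (m '' S) / c := by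
      apply Metric.diam_le_of_forall_dist_le (div_nonneg Metric.diam_nonneg hc.le)
      intro a ha b hb
      rw [le_div_iff₀ hc, mul_comm, ← hdist a b]
      exact Metric.dist_le_diam_of_mem (isBounded_image_of_scale hc hdist hS)
        ⟨a, ha, rfl⟩ ⟨b, hb, rfl⟩
    calc c * Metric.diam S ≤ c * (Metric.diam (m '' S) / c) :=
      mul_le_mul_of_nonneg_left h1 hc.le
    _ = Metric.diam (m '' S) := by field_simp

theorem szSlice_image {m : StrongDual ℝ E → StrongDual ℝ F} (hm : wcont m) (hinj : Function.Injective m)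
    {c : ℝ} (hc : 0 < c) (hdist : ∀ a b, dist (m a) (m b) = c * dist a b)
    {A : Set (StrongDual ℝ E)} (hA : wcpt A) (hAb : IsBounded A) (ε : ℝ) :
    szSlice (c * ε) (m '' A) = m '' szSlice ε A := by
  apply Set.Subset.antisymm
  · rintro g hg
    rw [mem_szSlice_iff] at hg
    obtain ⟨⟨f, hf, rfl⟩, h⟩ := hg
    refine ⟨f, ?_, rfl⟩
    rw [mem_szSlice_iff]
    refine ⟨hf, fun U hU hfU => ?_⟩
    have hV : wop ((m '' (A \ U))ᶜ) :=
      wop_compl_of_wcl (wcl_of_wcpt (hm.image_wcpt (hA.diff_wop hU)))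
    have hgV : m f ∈ (m '' (A \ U))ᶜ := by
      rintro ⟨f', hf', he⟩
      exact hf'.2 (hinj he ▸ hfU)
    have hlt := h _ hV hgV
    have hsub : m '' A ∩ (m '' (A \ U))ᶜ ⊆ m '' (A ∩ U) := by
      rintro x ⟨⟨a, ha, rfl⟩, hx⟩
      by_cases haU : a ∈ U
      · exact ⟨a, ⟨ha, haU⟩, rfl⟩
      · exact absurd ⟨a, ⟨ha, haU⟩, rfl⟩ hx
    have hb2 : IsBounded (m '' (A ∩ U)) :=
      isBounded_image_of_scale hc hdist (hAb.subset Set.inter_subset_left)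
    have hle : Metric.diam (m '' A ∩ (m '' (A \ U))ᶜ) ≤ Metric.diam (m '' (A ∩ U)) :=
      Metric.diam_mono hsub hb2
    have : c * ε < c * Metric.diam (A ∩ U) := by
      rw [← diam_image_of_scale hc hdist (hAb.subset Set.inter_subset_left)]
      exact hlt.trans_le hle
    exact lt_of_mul_lt_mul_left this hc.le
  · rintro g ⟨f, hf, rfl⟩
    rw [mem_szSlice_iff] at hf ⊢
    refine ⟨⟨f, hf.1, rfl⟩, fun V hV hgV => ?_⟩
    have hU : wop (m ⁻¹' V) := hm.preimage_wop hV
    have hlt := hf.2 _ hU hgV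
    have hsub : m '' (A ∩ m ⁻¹' V) ⊆ m '' A ∩ V := by
      rintro x ⟨a, ⟨ha, haV⟩, rfl⟩
      exact ⟨⟨a, ha, rfl⟩, haV⟩
    calc c * ε < c * Metric.diam (A ∩ m ⁻¹' V) :=
      (mul_lt_mul_iff_right₀ hc).2 hlt
    _ = Metric.diam (m '' (A ∩ m ⁻¹' V)) :=
      (diam_image_of_scale hc hdist (hAb.subset Set.inter_subset_left)).symm
    _ ≤ Metric.diam (m '' A ∩ V) := Metric.diam_mono hsub
        ((isBounded_image_of_scale hc hdist hAb).subset Set.inter_subset_left)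

theorem wcpt_derivIter {d : Set (StrongDual ℝ E) → Set (StrongDual ℝ E)} (hd : ∀ A, d A ⊆ A)
    (hdc : ∀ A, wcpt A → wcpt (d A)) {K : Set (StrongDual ℝ E)} (hK : wcpt K) :
    ∀ γ : Ordinal, wcpt (derivIter d K γ) := by
  intro γ
  induction γ using Ordinal.limitRecOn with
  | zero => rwa [derivIter_zero]
  | add_one ξ ih => rw [derivIter_succ]; exact hdc _ ih
  | limit ξ hξ ih =>
    rw [derivIter_limit _ _ hξ]
    have : Nonempty (Set.Iio ξ) := ⟨⟨0, hξ.pos⟩⟩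
    exact wcpt_iInter fun ζ => ih ζ.1 ζ.2

theorem derivIter_image {m : StrongDual ℝ E → StrongDual ℝ F} (hm : wcont m) (hinj : Function.Injective m)
    {c : ℝ} (hc : 0 < c) (hdist : ∀ a b, dist (m a) (m b) = c * dist a b)
    {K : Set (StrongDual ℝ E)} (hK : wcpt K) (hKb : IsBounded K) (ε : ℝ) :
    ∀ γ : Ordinal, derivIter (szSlice (c * ε)) (m '' K) γ = m '' derivIter (szSlice ε) K γ := by
  intro γ
  induction γ using Ordinal.limitRecOn with
  | zero => rw [derivIter_zero, derivIter_zero]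
  | add_one ξ ih =>
    rw [derivIter_succ, derivIter_succ, ih]
    exact szSlice_image hm hinj hc hdist
      (wcpt_derivIter (szSlice_subset ε) (fun A hA => wcpt_szSlice hA) hK ξ)
      (hKb.subset (derivIter_subset (szSlice_subset ε) K ξ)) ε
  | limit ξ hξ ih =>
    rw [derivIter_limit _ _ hξ, derivIter_limit _ _ hξ]
    have : Nonempty (Set.Iio ξ) := ⟨⟨0, hξ.pos⟩⟩
    rw [Set.InjOn.image_iInter_eq (hinj.injOn)]
    exact Set.iInter_congr fun ζ => ih ζ.1 ζ.2


theorem wcpt_derivIter' {δ : ℝ} {K : Set (StrongDual ℝ E)} (hK : wcpt K) :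
    ∀ γ : Ordinal, wcpt (derivIter (szSlice δ) K γ) :=
  wcpt_derivIter (szSlice_subset δ) (fun _ hA => wcpt_szSlice hA) hK

theorem wcpt_derivIter'' {m : StrongDual ℝ E → StrongDual ℝ F} {θ : ℝ} {K : Set (StrongDual ℝ E)} (hK : wcpt K) :
    ∀ γ : Ordinal, wcpt (derivIter (mSlice m θ) K γ) :=
  wcpt_derivIter (mSlice_subset m θ) (fun _ hA => wcpt_mSlice hA) hK

-- ===== S5: perturbation lemma =====

theorem mem_add_closedBall {f : StrongDual ℝ E} {A : Set (StrongDual ℝ E)} {ε : ℝ} :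
    f ∈ A + Metric.closedBall 0 ε ↔ ∃ g ∈ A, dist g f ≤ ε := by
  constructor
  · rintro ⟨g, hg, e, he, rfl⟩
    refine ⟨g, hg, ?_⟩
    rw [dist_comm, dist_eq_norm]
    simpa using mem_closedBall_zero_iff.1 he
  · rintro ⟨g, hg, hd⟩
    refine ⟨g, hg, f - g, ?_, add_sub_cancel g f⟩
    rw [mem_closedBall_zero_iff]
    rw [dist_comm, dist_eq_norm] at hd
    exact hd

theorem perturb_step {L K : Set (StrongDual ℝ E)} (hL : wcpt L) (hLb : IsBounded L) {ε δ : ℝ}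
    (hε : 0 ≤ ε) (hδ : 0 ≤ δ)
    (hKL : K ⊆ L + Metric.closedBall 0 ε) :
    szSlice (2 * δ + 4 * ε) K ⊆ szSlice δ L + Metric.closedBall 0 ε := by
  intro f hf
  by_contra hfn
  rw [mem_szSlice_iff] at hf
  obtain ⟨hfK, hfd⟩ := hf
  -- every point of C := L ∩ ball(f,ε) is removed from L
  have hC : ∀ g, g ∈ L → dist g f ≤ ε → ∃ U, wop U ∧ g ∈ U ∧ Metric.diam (L ∩ U) ≤ δ := by
    intro g hgL hgf
    have hgn : g ∉ szSlice δ L := fun hmem => hfn (mem_add_closedBall.2 ⟨g, hmem, hgf⟩)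
    rw [mem_szSlice_iff] at hgn
    push_neg at hgn
    obtain ⟨U, hU, hgU, hd⟩ := hgn hgL
    exact ⟨U, hU, hgU, hd⟩
  classical
  set C : Set (StrongDual ℝ E) := L ∩ Metric.closedBall f ε with hCdef
  choose Ug hUg hgUg hdUg using fun g (hg : g ∈ C) =>
    hC g hg.1 (by simpa [dist_comm] using Metric.mem_closedBall.1 hg.2)
  set U : Set (StrongDual ℝ E) := ⋃ (g : StrongDual ℝ E) (hg : g ∈ C), Ug g hg with hUdef
  have hUop : wop U := wop_iUnion fun g => wop_iUnion fun hg => hUg g hg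
  have hD : wcpt ((L \ U) + Metric.closedBall 0 ε) :=
    (hL.diff_wop hUop).add (wcpt_closedBall 0 ε)
  have hfM : f ∉ (L \ U) + Metric.closedBall 0 ε := by
    intro hfM
    obtain ⟨g, hg, hgf⟩ := mem_add_closedBall.1 hfM
    have hgC : g ∈ C := ⟨hg.1, by simpa [dist_comm] using hgf⟩
    exact hg.2 (Set.mem_iUnion.2 ⟨g, Set.mem_iUnion.2 ⟨hgC, hgUg g hgC⟩⟩)
  have hWop : wop ((L \ U + Metric.closedBall 0 ε)ᶜ) :=
    wop_compl_of_wcl (wcl_of_wcpt hD)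
  have hdist : ∀ f' ∈ K ∩ (L \ U + Metric.closedBall 0 ε)ᶜ, dist f' f ≤ δ + 2 * ε := by
    rintro f' ⟨hf'K, hf'W⟩
    obtain ⟨g', hg'L, hg'f'⟩ := mem_add_closedBall.1 (hKL hf'K)
    have hg'U : g' ∈ U := by
      by_contra hg'U
      exact hf'W (mem_add_closedBall.2 ⟨g', ⟨hg'L, hg'U⟩, hg'f'⟩)
    rw [hUdef] at hg'U
    simp only [Set.mem_iUnion] at hg'U
    obtain ⟨g, hgC, hg'Ug⟩ := hg'U
    have h1 : dist g' g ≤ δ := by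
      have hb : IsBounded (L ∩ Ug g hgC) := hLb.subset Set.inter_subset_left
      calc dist g' g ≤ Metric.diam (L ∩ Ug g hgC) :=
        Metric.dist_le_diam_of_mem hb ⟨hg'L, hg'Ug⟩ ⟨hgC.1, hgUg g hgC⟩
      _ ≤ δ := hdUg g hgC
    have h2 : dist g f ≤ ε := by simpa [dist_comm] using Metric.mem_closedBall.1 hgC.2
    calc dist f' f ≤ dist f' g' + dist g' g + dist g f := dist_triangle4 f' g' g f
    _ ≤ ε + δ + ε := by
        have := hg'f'
        rw [dist_comm] at this
        exact add_le_add (add_le_add this h1) h2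
    _ = δ + 2 * ε := by ring
  have hlt := hfd _ hWop hfM
  have : Metric.diam (K ∩ (L \ U + Metric.closedBall 0 ε)ᶜ) ≤ 2 * δ + 4 * ε := by
    apply Metric.diam_le_of_forall_dist_le
    · linarith
    · intro x hx y hy
      calc dist x y ≤ dist x f + dist y f := dist_triangle_right x y f
      _ ≤ (δ + 2 * ε) + (δ + 2 * ε) := add_le_add (hdist x hx) (hdist y hy)
      _ = 2 * δ + 4 * ε := by ring
  exact absurd hlt (not_lt.2 this)

theorem iInter_add_closedBall {ι : Type*} [Nonempty ι] {A : ι → Set (StrongDual ℝ E)}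
    (hdir : Directed (· ⊇ ·) A) (hcp : ∀ i, wcpt (A i)) {ε : ℝ} :
    ⋂ i, (A i + Metric.closedBall 0 ε) ⊆ (⋂ i, A i) + Metric.closedBall 0 ε := by
  intro f hf
  simp only [Set.mem_iInter] at hf
  have h1 : (⋂ i, A i ∩ Metric.closedBall f ε).Nonempty := by
    apply wcpt_iInter_nonempty
    · intro i j
      obtain ⟨k, hki, hkj⟩ := hdir i j
      exact ⟨k, Set.inter_subset_inter_left _ hki, Set.inter_subset_inter_left _ hkj⟩
    · exact fun i => (hcp i).inter_wcl (wcl_of_wcpt (wcpt_closedBall f ε))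
    · intro i
      obtain ⟨g, hg, hgf⟩ := mem_add_closedBall.1 (hf i)
      exact ⟨g, hg, by simpa [dist_comm] using hgf⟩
  obtain ⟨g, hg⟩ := h1
  simp only [Set.mem_iInter, Set.mem_inter_iff] at hg
  refine mem_add_closedBall.2 ⟨g, Set.mem_iInter.2 fun i => (hg i).1, ?_⟩
  simpa [dist_comm] using Metric.mem_closedBall.1 (hg (Classical.arbitrary _)).2

theorem perturb {L : Set (StrongDual ℝ E)} (hL : wcpt L) (hLb : IsBounded L) {ε δ : ℝ}
    (hε : 0 ≤ ε) (hδ : 0 ≤ δ) {K : Set (StrongDual ℝ E)} (hKL : K ⊆ L + Metric.closedBall 0 ε) :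
    ∀ γ : Ordinal, derivIter (szSlice (2 * δ + 4 * ε)) K γ ⊆
      derivIter (szSlice δ) L γ + Metric.closedBall 0 ε := by
  intro γ
  induction γ using Ordinal.limitRecOn with
  | zero => rw [derivIter_zero, derivIter_zero]; exact hKL
  | add_one ξ ih =>
    rw [derivIter_succ, derivIter_succ]
    have hLξ : wcpt (derivIter (szSlice δ) L ξ) :=
      wcpt_derivIter' hL ξ
    have hLξb : IsBounded (derivIter (szSlice δ) L ξ) :=
      hLb.subset (derivIter_subset (szSlice_subset δ) L ξ)
    exact perturb_step (ε := ε) (δ := δ) hLξ hLξb hε hδ ih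
  | limit ξ hξ ih =>
    rw [derivIter_limit _ _ hξ, derivIter_limit _ _ hξ]
    have : Nonempty (Set.Iio ξ) := ⟨⟨0, hξ.pos⟩⟩
    refine Set.Subset.trans ?_ (iInter_add_closedBall ?_ ?_)
    · exact Set.iInter_mono fun ζ => ih ζ.1 ζ.2
    · intro i j
      rcases le_total i.1 j.1 with h | h
      · exact ⟨j, derivIter_antitone (szSlice_subset δ) L h, le_rfl⟩
      · exact ⟨i, le_rfl, derivIter_antitone (szSlice_subset δ) L h⟩
    · exact fun ζ => wcpt_derivIter' hL ζ.1

-- ===== S6: localization =====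

theorem szSlice_inter_wop {A U : Set (StrongDual ℝ E)} (hU : wop U) (δ : ℝ) :
    szSlice δ A ∩ U ⊆ szSlice δ (A ∩ U) := by
  rintro f ⟨hfs, hfU⟩
  rw [mem_szSlice_iff] at hfs ⊢
  refine ⟨⟨hfs.1, hfU⟩, fun V hV hfV => ?_⟩
  have := hfs.2 (U ∩ V) (wop_inter hU hV) ⟨hfU, hfV⟩
  rwa [← Set.inter_assoc] at this

theorem derivIter_inter_wop {A U G : Set (StrongDual ℝ E)} (hU : wop U) (hG : IsBounded G)
    (hA : A ⊆ G) (δ : ℝ) :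
    ∀ γ : Ordinal, derivIter (szSlice δ) A γ ∩ U ⊆ derivIter (szSlice δ) (A ∩ U) γ := by
  intro γ
  induction γ using Ordinal.limitRecOn with
  | zero => rw [derivIter_zero, derivIter_zero]
  | add_one ξ ih =>
    rw [derivIter_succ, derivIter_succ]
    refine (szSlice_inter_wop hU δ).trans ?_
    exact szSlice_le le_rfl hG ih
      ((derivIter_subset (szSlice_subset δ) _ ξ).trans (Set.inter_subset_left.trans hA))
  | limit ξ hξ ih =>
    rw [derivIter_limit _ _ hξ, derivIter_limit _ _ hξ]
    intro x hx
    obtain ⟨hx1, hx2⟩ := hx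
    simp only [Set.mem_iInter] at hx1 ⊢
    exact fun ζ => ih ζ.1 ζ.2 ⟨hx1 ζ, hx2⟩

-- ===== S7: surjection lemma =====

theorem isBounded_image_of_lip {m : StrongDual ℝ E → StrongDual ℝ F}
    (hlip : ∀ a b, dist (m a) (m b) ≤ dist a b) {S : Set (StrongDual ℝ E)}
    (hS : IsBounded S) : IsBounded (m '' S) := by
  rw [Metric.isBounded_iff] at hS ⊢
  obtain ⟨C, hC⟩ := hS
  refine ⟨C, ?_⟩
  rintro x ⟨a, ha, rfl⟩ y ⟨b, hb, rfl⟩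
  exact (hlip a b).trans (hC ha hb)

theorem surj_step {m : StrongDual ℝ E → StrongDual ℝ F} (hm : wcont m)
    (hlip : ∀ a b, dist (m a) (m b) ≤ dist a b) {A : Set (StrongDual ℝ E)} (hA : wcpt A)
    (hAb : IsBounded A) {θ : ℝ} (hθ : 0 ≤ θ) :
    szSlice (2 * θ) (m '' A) ⊆ m '' (mSlice m θ A) := by
  intro y hy
  rw [mem_szSlice_iff] at hy
  obtain ⟨hyA, hyd⟩ := hy
  by_contra hyn
  classical
  set Fs : Set (StrongDual ℝ E) := A ∩ m ⁻¹' {y} with hFdef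
  have hFcp : wcpt Fs := hA.inter_wcl (hm.preimage_wcl (wcl_singleton y))
  have hFn : ∀ f, f ∈ Fs → ∃ U, wop U ∧ f ∈ U ∧ Metric.diam (m '' (A ∩ U)) ≤ θ := by
    intro f hf
    have : f ∉ mSlice m θ A := fun hmem => hyn ⟨f, hmem, hf.2⟩
    simp only [mSlice, Set.mem_setOf_eq, not_and, not_forall, not_lt] at this
    obtain ⟨U, hU, hfU, hd⟩ := this hf.1
    exact ⟨U, hU, hfU, hd⟩
  choose Uf hUf hfUf hdUf using hFn
  -- cover the compact set Fs by finitely many of the Uf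
  have hWf : ∀ (f : StrongDual ℝ E) (hf : f ∈ Fs), ∃ W : Set (WeakDual ℝ E), IsOpen W ∧
      Uf f hf = (fun g => StrongDual.toWeakDual g) ⁻¹' W := fun f hf => hUf f hf
  choose Wf hWfo hWfeq using hWf
  have hcov : ((fun g : StrongDual ℝ E => StrongDual.toWeakDual g) '' Fs) ⊆
      ⋃ f : Fs, Wf f.1 f.2 := by
    rintro x ⟨f, hf, rfl⟩
    have : f ∈ Uf f hf := hfUf f hf
    rw [hWfeq f hf] at this
    exact Set.mem_iUnion.2 ⟨⟨f, hf⟩, this⟩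
  obtain ⟨t, ht⟩ := hFcp.elim_finite_subcover (fun f : Fs => Wf f.1 f.2)
    (fun f => hWfo f.1 f.2) hcov
  set Ubig : Set (StrongDual ℝ E) := ⋃ f ∈ t, Uf f.1 f.2 with hUbig
  have hUbigop : wop Ubig := wop_iUnion fun f => wop_iUnion fun _ => hUf f.1 f.2
  have hFsub : Fs ⊆ Ubig := by
    intro f hf
    have : StrongDual.toWeakDual f ∈ ⋃ i ∈ t, Wf i.1 i.2 := ht ⟨f, hf, rfl⟩
    simp only [Set.mem_iUnion] at this
    obtain ⟨i, hit, hfW⟩ := this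
    refine Set.mem_iUnion.2 ⟨i, Set.mem_iUnion.2 ⟨hit, ?_⟩⟩
    rw [hWfeq i.1 i.2]
    exact hfW
  have hVop : wop ((m '' (A \ Ubig))ᶜ) :=
    wop_compl_of_wcl (wcl_of_wcpt (hm.image_wcpt (hA.diff_wop hUbigop)))
  have hyV : y ∈ (m '' (A \ Ubig))ᶜ := by
    rintro ⟨a, ha, rfl⟩
    exact ha.2 (hFsub ⟨ha.1, rfl⟩)
  have hlt := hyd _ hVop hyV
  have hbound : ∀ x ∈ m '' A ∩ (m '' (A \ Ubig))ᶜ, dist x y ≤ θ := by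
    rintro x ⟨⟨a, ha, rfl⟩, hxV⟩
    have haU : a ∈ Ubig := by
      by_contra haU
      exact hxV ⟨a, ⟨ha, haU⟩, rfl⟩
    rw [hUbig] at haU
    simp only [Set.mem_iUnion] at haU
    obtain ⟨i, hit, haUf⟩ := haU
    have hb : IsBounded (m '' (A ∩ Uf i.1 i.2)) :=
      isBounded_image_of_lip hlip (hAb.subset Set.inter_subset_left)
    have h1 : m a ∈ m '' (A ∩ Uf i.1 i.2) := ⟨a, ⟨ha, haUf⟩, rfl⟩
    have h2 : y ∈ m '' (A ∩ Uf i.1 i.2) := by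
      refine ⟨i.1, ⟨i.2.1, hfUf i.1 i.2⟩, ?_⟩
      have := i.2.2
      simpa using this
    exact (Metric.dist_le_diam_of_mem hb h1 h2).trans (hdUf i.1 i.2)
  have : Metric.diam (m '' A ∩ (m '' (A \ Ubig))ᶜ) ≤ 2 * θ := by
    apply Metric.diam_le_of_forall_dist_le (by linarith)
    intro x hx z hz
    calc dist x z ≤ dist x y + dist z y := dist_triangle_right x z y
    _ ≤ θ + θ := add_le_add (hbound x hx) (hbound z hz)
    _ = 2 * θ := by ring
  exact absurd hlt (not_lt.2 this)

theorem image_iInter_of_wcpt {m : StrongDual ℝ E → StrongDual ℝ F} (hm : wcont m) {ι : Type*} [Nonempty ι]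
    {A : ι → Set (StrongDual ℝ E)} (hdir : Directed (· ⊇ ·) A) (hcp : ∀ i, wcpt (A i)) :
    ⋂ i, m '' A i ⊆ m '' ⋂ i, A i := by
  intro y hy
  simp only [Set.mem_iInter] at hy
  have h1 : (⋂ i, A i ∩ m ⁻¹' {y}).Nonempty := by
    apply wcpt_iInter_nonempty
    · intro i j
      obtain ⟨k, hki, hkj⟩ := hdir i j
      exact ⟨k, Set.inter_subset_inter_left _ hki, Set.inter_subset_inter_left _ hkj⟩
    · exact fun i => (hcp i).inter_wcl (hm.preimage_wcl (wcl_singleton y))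
    · intro i
      obtain ⟨a, ha, rfl⟩ := hy i
      exact ⟨a, ha, rfl⟩
  obtain ⟨a, ha⟩ := h1
  simp only [Set.mem_iInter, Set.mem_inter_iff] at ha
  refine ⟨a, Set.mem_iInter.2 fun i => (ha i).1, ?_⟩
  have := (ha (Classical.arbitrary _)).2
  simpa using this

theorem surj_iter {m : StrongDual ℝ E → StrongDual ℝ F} (hm : wcont m)
    (hlip : ∀ a b, dist (m a) (m b) ≤ dist a b) {K : Set (StrongDual ℝ E)} (hK : wcpt K)
    (hKb : IsBounded K) {θ : ℝ} (hθ : 0 ≤ θ) :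
    ∀ γ : Ordinal, derivIter (szSlice (2 * θ)) (m '' K) γ ⊆
      m '' derivIter (mSlice m θ) K γ := by
  intro γ
  induction γ using Ordinal.limitRecOn with
  | zero => rw [derivIter_zero, derivIter_zero]
  | add_one ξ ih =>
    rw [derivIter_succ, derivIter_succ]
    have h1 : szSlice (2*θ) (derivIter (szSlice (2*θ)) (m '' K) ξ) ⊆
        szSlice (2*θ) (m '' derivIter (mSlice m θ) K ξ) :=
      szSlice_le le_rfl (isBounded_image_of_lip hlip hKb) ih
        (Set.image_mono (derivIter_subset (mSlice_subset m θ) K ξ))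
    refine h1.trans ?_
    exact surj_step hm hlip (wcpt_derivIter'' hK ξ)
      (hKb.subset (derivIter_subset (mSlice_subset m θ) K ξ)) hθ
  | limit ξ hξ ih =>
    rw [derivIter_limit _ _ hξ, derivIter_limit _ _ hξ]
    have : Nonempty (Set.Iio ξ) := ⟨⟨0, hξ.pos⟩⟩
    refine Set.Subset.trans (Set.iInter_mono fun ζ => ih ζ.1 ζ.2) ?_
    apply image_iInter_of_wcpt hm
    · intro i j
      rcases le_total i.1 j.1 with h | h
      · exact ⟨j, derivIter_antitone (mSlice_subset m θ) K h, le_rfl⟩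
      · exact ⟨i, le_rfl, derivIter_antitone (mSlice_subset m θ) K h⟩
    · exact fun ζ => wcpt_derivIter'' hK ζ.1

-- ===== S7b: pullback =====

theorem mSlice_pullback {m : StrongDual ℝ E → StrongDual ℝ F} (hm : wcont m) {K : Set (StrongDual ℝ E)}
    {L : Set (StrongDual ℝ F)} (hKL : m '' K ⊆ L) (hLb : IsBounded L) {θ : ℝ} :
    ∀ γ : Ordinal, derivIter (mSlice m θ) K γ ⊆ m ⁻¹' (derivIter (szSlice θ) L γ) := by
  intro γ
  induction γ using Ordinal.limitRecOn with
  | zero =>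
    rw [derivIter_zero, derivIter_zero]
    exact fun f hf => hKL ⟨f, hf, rfl⟩
  | add_one ξ ih =>
    rw [derivIter_succ, derivIter_succ]
    rintro f ⟨hfT, hfsl⟩
    rw [Set.mem_preimage, mem_szSlice_iff]
    refine ⟨ih hfT, fun V hV hfV => ?_⟩
    have hU : wop (m ⁻¹' V) := hm.preimage_wop hV
    have hlt := hfsl _ hU hfV
    refine hlt.trans_le (Metric.diam_mono ?_ (hLb.subset
      (Set.inter_subset_left.trans (derivIter_subset (szSlice_subset θ) L ξ))))
    rintro x ⟨a, ⟨haT, haV⟩, rfl⟩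
    exact ⟨ih haT, haV⟩
  | limit ξ hξ ih =>
    rw [derivIter_limit _ _ hξ, derivIter_limit _ _ hξ]
    intro f hf
    simp only [Set.mem_iInter] at hf
    rw [Set.mem_preimage, Set.mem_iInter]
    exact fun ζ => ih ζ.1 ζ.2 (hf ζ)

-- ===== S8: compactness at limits =====

theorem exists_lt_of_derivIter_empty {K : Set (StrongDual ℝ E)} (hK : wcpt K) {Γ : Ordinal}
    (hΓ : Order.IsSuccLimit Γ) {ε : ℝ} (h : derivIter (szSlice ε) K Γ = ∅) :
    ∃ γ < Γ, derivIter (szSlice ε) K γ = ∅ := by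
  by_contra hc
  push_neg at hc
  have hne : ∀ ζ : Set.Iio Γ, (derivIter (szSlice ε) K ζ.1).Nonempty :=
    fun ζ => hc ζ.1 ζ.2
  have : Nonempty (Set.Iio Γ) := ⟨⟨0, hΓ.pos⟩⟩
  have hnon : (⋂ ζ : Set.Iio Γ, derivIter (szSlice ε) K ζ.1).Nonempty := by
    apply wcpt_iInter_nonempty
    · intro i j
      rcases le_total i.1 j.1 with hle | hle
      · exact ⟨j, derivIter_antitone (szSlice_subset ε) K hle, le_rfl⟩
      · exact ⟨i, le_rfl, derivIter_antitone (szSlice_subset ε) K hle⟩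
    · exact fun ζ => wcpt_derivIter' hK ζ.1
    · exact hne
  rw [← derivIter_limit _ _ hΓ, h] at hnon
  exact Set.not_nonempty_empty hnon


end Generic

-- ===================== S9: the concrete maps =====================

section Spaces
variable {X : Type*} [NormedAddCommGroup X] [NormedSpace ℝ X]
  (Y : Submodule ℝ X) [hY : IsClosed (Y : Set X)]

/-- Restriction of functionals to the subspace `Y`. -/
noncomputable def resDual : StrongDual ℝ X → StrongDual ℝ Y := fun f => f.comp Y.subtypeL

/-- The quotient map `X → X ⧸ Y` as a continuous linear map. -/
noncomputable def quotCLM : X →L[ℝ] X ⧸ Y :=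
  LinearMap.mkContinuous Y.mkQ 1 (fun x => by
    simpa using Submodule.Quotient.norm_mk_le (S := Y) x)

/-- Pull-back of functionals on the quotient. -/
noncomputable def coDual : StrongDual ℝ (X ⧸ Y) → StrongDual ℝ X := fun g => g.comp (quotCLM Y)

theorem resDual_lip : ∀ f g : StrongDual ℝ X, dist (resDual Y f) (resDual Y g) ≤ dist f g := by
  intro f g
  rw [dist_eq_norm, dist_eq_norm (resDual Y f) (resDual Y g)]
  have : resDual Y f - resDual Y g = (f - g).comp Y.subtypeL := by
    ext y; simp [resDual]
  rw [this]
  calc ‖(f - g).comp Y.subtypeL‖ ≤ ‖f - g‖ * ‖Y.subtypeL‖ :=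
    ContinuousLinearMap.opNorm_comp_le _ _
  _ ≤ ‖f - g‖ * 1 := by
      have := Submodule.norm_subtypeL_le Y
      nlinarith [norm_nonneg (f - g), norm_nonneg Y.subtypeL]
  _ = ‖f - g‖ := mul_one _

theorem resDual_wcont : wcont (resDual Y) := by
  apply WeakDual.continuous_of_continuous_eval
  intro y
  exact WeakDual.eval_continuous (Y.subtypeL y : X)

theorem quotCLM_norm_apply (x : X) : ‖quotCLM Y x‖ ≤ ‖x‖ := by
  simpa [quotCLM] using Submodule.Quotient.norm_mk_le (S := Y) x

theorem coDual_dist : ∀ a b : StrongDual ℝ (X ⧸ Y), dist (coDual Y a) (coDual Y b)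
    = 1 * dist a b := by
  have key : ∀ g : StrongDual ℝ (X ⧸ Y), ‖coDual Y g‖ = ‖g‖ := by
    intro g
    apply le_antisymm
    · apply ContinuousLinearMap.opNorm_le_bound _ (norm_nonneg g)
      intro x
      calc ‖g (quotCLM Y x)‖ ≤ ‖g‖ * ‖quotCLM Y x‖ := g.le_opNorm _
      _ ≤ ‖g‖ * ‖x‖ := mul_le_mul_of_nonneg_left (quotCLM_norm_apply Y x) (norm_nonneg g)
    · apply ContinuousLinearMap.opNorm_le_bound _ (norm_nonneg _)
      intro z
      by_contra hcon
      push_neg at hcon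
      set C : ℝ := ‖coDual Y g‖ with hCdef
      have hC : 0 ≤ C := norm_nonneg _
      set η : ℝ := (‖g z‖ - C * ‖z‖) / (C + 1) with hηdef
      have hη : 0 < η := by
        apply div_pos
        · linarith
        · linarith
      obtain ⟨x, hx1, hx2⟩ := Submodule.Quotient.norm_mk_lt z hη
      have hQx : quotCLM Y x = z := by
        simp only [quotCLM, LinearMap.mkContinuous_apply, Submodule.mkQ_apply]
        exact hx1
      have hle : ‖g z‖ ≤ C * ‖x‖ := by
        rw [← hQx]
        exact (coDual Y g).le_opNorm x
      have hone : ‖g z‖ ≤ C * ‖z‖ + C * η := by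
        calc ‖g z‖ ≤ C * ‖x‖ := hle
        _ ≤ C * (‖z‖ + η) := mul_le_mul_of_nonneg_left hx2.le hC
        _ = C * ‖z‖ + C * η := by ring
      have hmul : η * (C + 1) = ‖g z‖ - C * ‖z‖ := by
        rw [hηdef]
        field_simp
      nlinarith
  intro a b
  rw [dist_eq_norm, dist_eq_norm a b, one_mul]
  have : coDual Y a - coDual Y b = coDual Y (a - b) := by
    ext x; simp [coDual]
  rw [this, key]

theorem coDual_wcont : wcont (coDual Y) := by
  apply WeakDual.continuous_of_continuous_eval
  intro x
  exact WeakDual.eval_continuous (quotCLM Y x)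

theorem coDual_inj : Function.Injective (coDual Y) := by
  intro a b hab
  have h := coDual_dist Y a b
  rw [hab, dist_self] at h
  rw [← dist_eq_zero]
  linarith [dist_nonneg (x := a) (y := b)]

/-- Hahn-Banach: restriction maps the unit ball of `X*` onto that of `Y*`. -/
theorem resDual_ball : resDual Y '' Metric.closedBall 0 1
    = Metric.closedBall (0 : StrongDual ℝ Y) 1 := by
  apply Set.Subset.antisymm
  · rintro x ⟨f, hf, rfl⟩
    rw [Metric.mem_closedBall, dist_zero_right] at hf
    rw [Metric.mem_closedBall, dist_zero_right (resDual Y f)]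
    have h0 : resDual Y (0 : StrongDual ℝ X) = 0 := by ext y; simp [resDual]
    have hd := resDual_lip Y f 0
    rw [h0, dist_zero_right (resDual Y f), dist_zero_right f] at hd
    linarith
  · intro g hg
    obtain ⟨h, hext, hnorm⟩ := exists_extension_norm_eq (p := Y) g
    refine ⟨h, ?_, ?_⟩
    · rw [Metric.mem_closedBall, dist_zero_right, hnorm]
      rw [Metric.mem_closedBall, dist_zero_right g] at hg
      exact hg
    · ext y
      simp [resDual, hext y]

/-- Hahn-Banach: distance to the annihilator realizes the restriction norm. -/
theorem exists_annihilator_approx (f : StrongDual ℝ X) :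
    ∃ w : StrongDual ℝ X, resDual Y w = 0 ∧ ‖f - w‖ = ‖resDual Y f‖ := by
  obtain ⟨h, hext, hnorm⟩ := exists_extension_norm_eq (p := Y) (resDual Y f)
  refine ⟨f - h, ?_, ?_⟩
  · ext y
    simp [resDual, hext y]
  · rw [show f - (f - h) = h by abel, hnorm]

/-- Functionals vanishing on `Y` in the ball of radius `r` come from the quotient. -/
theorem annihilator_eq_image (r : ℝ) :
    {w : StrongDual ℝ X | resDual Y w = 0} ∩ Metric.closedBall 0 r
      = coDual Y '' Metric.closedBall 0 r := by
  apply Set.Subset.antisymm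
  · rintro w ⟨hw0, hwr⟩
    have hker : Y ≤ LinearMap.ker (w : X →ₗ[ℝ] ℝ) := by
      intro y hy
      have := congrArg (fun u => u ⟨y, hy⟩) hw0
      simpa [resDual] using this
    set g₀ : X ⧸ Y →ₗ[ℝ] ℝ := Y.liftQ (w : X →ₗ[ℝ] ℝ) hker with hg₀
    have hbound : ∀ m : X ⧸ Y, ‖g₀ m‖ ≤ ‖w‖ * ‖m‖ := by
      intro m
      by_contra hcon
      push_neg at hcon
      set η : ℝ := (‖g₀ m‖ - ‖w‖ * ‖m‖) / (‖w‖ + 1) with hηdef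
      have hη : 0 < η := by
        apply div_pos
        · linarith
        · linarith [norm_nonneg w]
      obtain ⟨x, hx1, hx2⟩ := Submodule.Quotient.norm_mk_lt m hη
      have hgm : g₀ m = w x := by
        rw [← hx1, hg₀]
        exact Submodule.liftQ_apply Y (w : X →ₗ[ℝ] ℝ) x
      have hle : ‖g₀ m‖ ≤ ‖w‖ * ‖x‖ := by rw [hgm]; exact w.le_opNorm x
      have hone : ‖g₀ m‖ ≤ ‖w‖ * ‖m‖ + ‖w‖ * η := by
        calc ‖g₀ m‖ ≤ ‖w‖ * ‖x‖ := hle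
        _ ≤ ‖w‖ * (‖m‖ + η) := mul_le_mul_of_nonneg_left hx2.le (norm_nonneg w)
        _ = ‖w‖ * ‖m‖ + ‖w‖ * η := by ring
      have hmul : η * (‖w‖ + 1) = ‖g₀ m‖ - ‖w‖ * ‖m‖ := by
        rw [hηdef]
        field_simp
      nlinarith
    set g : StrongDual ℝ (X ⧸ Y) := LinearMap.mkContinuous g₀ ‖w‖ hbound with hgdef
    have hφg : coDual Y g = w := by
      ext x
      show g (quotCLM Y x) = w x
      simp only [quotCLM, LinearMap.mkContinuous_apply, Submodule.mkQ_apply, hgdef]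
      exact Submodule.liftQ_apply Y (w : X →ₗ[ℝ] ℝ) x
    refine ⟨g, ?_, hφg⟩
    rw [Metric.mem_closedBall, dist_zero_right g]
    have : ‖coDual Y g‖ = 1 * ‖g‖ := by
      have := coDual_dist Y g 0
      simpa [dist_zero_right, dist_zero_right g, map_zero, coDual] using this
    rw [Metric.mem_closedBall, dist_zero_right] at hwr
    rw [hφg] at this
    linarith
  · rintro x ⟨g, hg, rfl⟩
    constructor
    · ext y
      show g (quotCLM Y (Y.subtypeL y)) = 0
      have : quotCLM Y (Y.subtypeL y) = 0 := by
        simp only [quotCLM, LinearMap.mkContinuous_apply, Submodule.mkQ_apply]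
        rw [Submodule.Quotient.mk_eq_zero]
        exact y.2
      rw [this, map_zero]
    · rw [Metric.mem_closedBall, dist_zero_right g] at hg
      rw [Metric.mem_closedBall, dist_zero_right]
      have : ‖coDual Y g‖ = 1 * ‖g‖ := by
        have h0 : coDual Y 0 = 0 := by ext x; simp [coDual]
        have := coDual_dist Y g 0
        rw [h0, dist_zero_right, dist_zero_right g] at this
        exact this
      rw [this, one_mul]
      exact hg

theorem coDual_ball_subset : coDual Y '' Metric.closedBall 0 1
    ⊆ Metric.closedBall (0 : StrongDual ℝ X) 1 := by
  rintro x ⟨g, hg, rfl⟩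
  rw [Metric.mem_closedBall, dist_zero_right g] at hg
  rw [Metric.mem_closedBall, dist_zero_right]
  have h0 : coDual Y 0 = 0 := by ext x; simp [coDual]
  have := coDual_dist Y g 0
  rw [h0, dist_zero_right, dist_zero_right g, one_mul] at this
  linarith

end Spaces

section Maps
variable {E : Type*} [NormedAddCommGroup E] [NormedSpace ℝ E]

theorem translation_wcont (v : StrongDual ℝ E) : wcont (fun g : StrongDual ℝ E => v + g) := by
  apply WeakDual.continuous_of_continuous_eval
  intro x
  have : (fun gw : WeakDual ℝ E =>
      (StrongDual.toWeakDual (v + WeakDual.toStrongDual gw)) x) = fun gw => v x + gw x := rfl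
  rw [this]
  exact continuous_const.add (WeakDual.eval_continuous x)

theorem translation_dist (v : StrongDual ℝ E) (a b : StrongDual ℝ E) :
    dist (v + a) (v + b) = 1 * dist a b := by rw [one_mul]; exact dist_add_left v a b

theorem smul3_wcont : wcont (fun g : StrongDual ℝ E => (3:ℝ) • g) := by
  apply WeakDual.continuous_of_continuous_eval
  intro x
  have : (fun gw : WeakDual ℝ E =>
      (StrongDual.toWeakDual ((3:ℝ) • WeakDual.toStrongDual gw)) x) = fun gw => (3:ℝ) * gw x := rfl
  rw [this]
  exact continuous_const.mul (WeakDual.eval_continuous x)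

theorem smul3_dist (a b : StrongDual ℝ E) :
    dist ((3:ℝ) • a) ((3:ℝ) • b) = 3 * dist a b := by
  rw [dist_smul₀ (3:ℝ) a b]
  norm_num

theorem smul3_inj : Function.Injective (fun g : StrongDual ℝ E => (3:ℝ) • g) :=
  smul_right_injective _ (by norm_num)

theorem smul3_ball : (fun g : StrongDual ℝ E => (3:ℝ) • g) '' Metric.closedBall 0 1
    = Metric.closedBall (0 : StrongDual ℝ E) 3 := by
  have := smul_closedBall (3:ℝ) (0 : StrongDual ℝ E) (zero_le_one)
  rw [smul_zero] at this
  norm_num at this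
  rw [← this]
  rfl

end Maps

-- ===================== S10: main quantitative lemma =====================

section Main
variable {X : Type*} [NormedAddCommGroup X] [NormedSpace ℝ X]
  (Y : Submodule ℝ X) [hY : IsClosed (Y : Set X)]

theorem lemmaQ (δ : ℝ) (hδ : 0 < δ) (α β : Ordinal)
    (hZ : derivIter (szSlice (δ/18)) (Metric.closedBall (0 : StrongDual ℝ (X ⧸ Y)) 1) α = ∅)
    (hYe : derivIter (szSlice (δ/6)) (Metric.closedBall (0 : StrongDual ℝ Y) 1) β = ∅) :
    derivIter (szSlice δ) (Metric.closedBall (0 : StrongDual ℝ X) 1) (α * β) = ∅ := by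
  have hα : α ≠ 0 := by
    rintro rfl
    rw [derivIter_zero] at hZ
    exact (Metric.nonempty_closedBall.2 zero_le_one).ne_empty hZ
  have hβ : β ≠ 0 := by
    rintro rfl
    rw [derivIter_zero] at hYe
    exact (Metric.nonempty_closedBall.2 zero_le_one).ne_empty hYe
  have hαβ : (1 : Ordinal) ≤ α * β := Ordinal.one_le_iff_ne_zero.2 (mul_ne_zero hα hβ)
  by_cases hδ2 : 2 ≤ δ
  · -- trivial case: the first derived set is already empty
    have h1 : derivIter (szSlice δ) (Metric.closedBall (0 : StrongDual ℝ X) 1) 1 = ∅ := by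
      rw [← zero_add (1 : Ordinal), derivIter_succ, derivIter_zero]
      ext f
      simp only [Set.mem_empty_iff_false, iff_false]
      intro hf
      rw [mem_szSlice_iff] at hf
      have h2 := hf.2 Set.univ wop_univ (Set.mem_univ f)
      rw [Set.inter_univ] at h2
      have h3 : Metric.diam (Metric.closedBall (0 : StrongDual ℝ X) 1) ≤ 2 := by
        apply Metric.diam_le_of_forall_dist_le (by norm_num)
        intro a ha b hb
        rw [Metric.mem_closedBall] at ha hb
        calc dist a b ≤ dist a 0 + dist b 0 := dist_triangle_right a b 0
        _ ≤ 1 + 1 := add_le_add ha hb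
        _ = 2 := by norm_num
      linarith
    exact Set.eq_empty_of_subset_empty
      ((derivIter_antitone (szSlice_subset δ) _ hαβ).trans (by rw [h1]))
  · push_neg at hδ2
    set ε : ℝ := δ / 6 with hεdef
    have hε : 0 < ε := by positivity
    have hε3 : ε < 1 / 3 := by rw [hεdef]; linarith
    have hBXcp : wcpt (Metric.closedBall (0 : StrongDual ℝ X) 1) := wcpt_closedBall 0 1
    have hBXb : IsBounded (Metric.closedBall (0 : StrongDual ℝ X) 1) := isBounded_closedBall
    -- Step A: the Y-slicing derivation exhausts in β steps
    have hTβ : derivIter (mSlice (resDual Y) ε) (Metric.closedBall (0 : StrongDual ℝ X) 1) β = ∅ := by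
      have hKL : resDual Y '' Metric.closedBall 0 1 ⊆ Metric.closedBall (0 : StrongDual ℝ Y) 1 := by
        rw [resDual_ball]
      have := mSlice_pullback (resDual_wcont Y) hKL isBounded_closedBall (θ := ε) β
      rw [hYe, Set.preimage_empty] at this
      exact Set.subset_empty_iff.1 this
    -- Step C: the core absorption
    have hcore : ∀ A : Set (StrongDual ℝ X), wcpt A → A ⊆ Metric.closedBall 0 1 →
        derivIter (szSlice δ) A α ⊆ mSlice (resDual Y) ε A := by
      intro A hA hAB f hf
      by_contra hft
      have hfA : f ∈ A := derivIter_subset (szSlice_subset δ) A α hf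
      have hft' : ∃ U, wop U ∧ f ∈ U ∧ Metric.diam (resDual Y '' (A ∩ U)) ≤ ε := by
        by_contra h2
        push_neg at h2
        exact hft ⟨hfA, fun U hU hfU => h2 U hU hfU⟩
      obtain ⟨U, hU, hfU, hdiam⟩ := hft'
      set M : Set (StrongDual ℝ X) := A ∩ U with hMdef
      have hMBX : M ⊆ Metric.closedBall 0 1 := Set.inter_subset_left.trans hAB
      have hfM : f ∈ derivIter (szSlice δ) M α :=
        derivIter_inter_wop hU isBounded_closedBall hAB δ α ⟨hf, hfU⟩
      have hfMm : f ∈ M := derivIter_subset (szSlice_subset δ) M α hfM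
      set E₃ : Set (StrongDual ℝ X) := {w | resDual Y w = 0} ∩ Metric.closedBall 0 3 with hE₃def
      set L : Set (StrongDual ℝ X) := (fun w => f + w) '' E₃ with hLdef
      have hE₃cp : wcpt E₃ := by
        rw [hE₃def, annihilator_eq_image]
        exact (coDual_wcont Y).image_wcpt (wcpt_closedBall 0 3)
      have hE₃b : IsBounded E₃ := isBounded_closedBall.subset Set.inter_subset_right
      have hLcp : wcpt L := (translation_wcont f).image_wcpt hE₃cp
      have hLb : IsBounded L := by
        apply isBounded_image_of_lip _ hE₃b
        intro a b
        rw [translation_dist f a b, one_mul]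
      have hMsub : M ⊆ L + Metric.closedBall 0 ε := by
        intro h hh
        have hnormh : ‖h‖ ≤ 1 := mem_closedBall_zero_iff.1 (hMBX hh)
        have hnormf : ‖f‖ ≤ 1 := mem_closedBall_zero_iff.1 (hMBX hfMm)
        have h1 : dist (resDual Y h) (resDual Y f) ≤ ε := by
          have hb : IsBounded (resDual Y '' M) :=
            isBounded_image_of_lip (resDual_lip Y) (isBounded_closedBall.subset hMBX)
          exact (Metric.dist_le_diam_of_mem hb ⟨h, hh, rfl⟩ ⟨f, hfMm, rfl⟩).trans hdiam
        obtain ⟨w, hw0, hwnorm⟩ := exists_annihilator_approx Y (h - f)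
        have hsub : resDual Y (h - f) = resDual Y h - resDual Y f := by
          ext y; simp [resDual]
        have h2 : ‖h - f - w‖ ≤ ε := by
          rw [hwnorm, hsub, ← dist_eq_norm (resDual Y h) (resDual Y f)]
          exact h1
        have hw3 : ‖w‖ ≤ 3 := by
          calc ‖w‖ = ‖(h - f) - (h - f - w)‖ := by congr 1; abel
          _ ≤ ‖h - f‖ + ‖h - f - w‖ := norm_sub_le _ _
          _ ≤ (‖h‖ + ‖f‖) + ε := add_le_add (norm_sub_le h f) h2
          _ ≤ 3 := by linarith
        refine Set.mem_add.2 ⟨f + w, ⟨w, ⟨hw0, mem_closedBall_zero_iff.2 hw3⟩, rfl⟩,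
          h - f - w, mem_closedBall_zero_iff.2 h2, by abel⟩
      -- the translated annihilator slab has empty α-th derived set
      have hstep1 : derivIter (szSlice ε) (Metric.closedBall (0 : StrongDual ℝ (X ⧸ Y)) 3) α
          = ∅ := by
        rw [← smul3_ball, show (ε : ℝ) = 3 * (δ/18) by rw [hεdef]; ring,
          derivIter_image smul3_wcont smul3_inj (by norm_num) smul3_dist
            (wcpt_closedBall 0 1) isBounded_closedBall (δ/18) α,
          hZ, Set.image_empty]
      have hstep2 : derivIter (szSlice ε) E₃ α = ∅ := by
        rw [hE₃def, annihilator_eq_image, ← one_mul ε,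
          derivIter_image (coDual_wcont Y) (coDual_inj Y) one_pos (coDual_dist Y)
            (wcpt_closedBall 0 3) isBounded_closedBall ε α,
          hstep1, Set.image_empty]
      have hstep3 : derivIter (szSlice ε) L α = ∅ := by
        rw [hLdef, ← one_mul ε,
          derivIter_image (translation_wcont f) (fun a b hab => by
            simpa using add_right_injective f hab) one_pos (translation_dist f)
            hE₃cp hE₃b ε α,
          hstep2, Set.image_empty]
      have hpert := perturb (δ := ε) hLcp hLb hε.le hε.le hMsub α
      rw [hstep3, Set.empty_add] at hpert
      have hδeq : δ = 2 * ε + 4 * ε := by rw [hεdef]; ring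
      rw [hδeq] at hfM
      exact Set.notMem_empty f (hpert hfM)
    -- Step B: interleaving
    have hB : ∀ γ : Ordinal, derivIter (szSlice δ) (Metric.closedBall (0 : StrongDual ℝ X) 1) (α * γ)
        ⊆ derivIter (mSlice (resDual Y) ε) (Metric.closedBall (0 : StrongDual ℝ X) 1) γ := by
      intro γ
      induction γ using Ordinal.limitRecOn with
      | zero => rw [mul_zero, derivIter_zero, derivIter_zero]
      | add_one ξ ih =>
        rw [mul_add_one, derivIter_add (szSlice_subset δ), derivIter_succ]
        have h1 := derivIter_le_general (szSlice_subset δ)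
          (fun A B hAB hBG => szSlice_le le_rfl hBXb hAB hBG) ih
          (derivIter_subset (mSlice_subset (resDual Y) ε) _ ξ) α
        exact h1.trans (hcore _ (wcpt_derivIter'' hBXcp ξ)
          (derivIter_subset (mSlice_subset (resDual Y) ε) _ ξ))
      | limit ξ hξ ih =>
        rw [derivIter_limit _ _ hξ]
        apply Set.subset_iInter
        rintro ⟨ζ, hζ⟩
        refine Set.Subset.trans ?_ (ih ζ hζ)
        exact derivIter_antitone (szSlice_subset δ) _ (mul_le_mul_right hζ.le α)
    have hfin := hB β
    rw [hTβ] at hfin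
    exact Set.subset_empty_iff.1 hfin

end Main

-- ===================== S11: final assembly =====================

/-- For a closed subspace `Y` of a Banach space `X`: `Sz Y ≤ Sz X`, `Sz(X/Y) ≤ Sz X`,
`Sz X ≤ Sz(X/Y) · Sz Y`, and the three-space properties for `Sz < ω^(ω^ξ)` and
`Sz ≤ ω^(ω^ξ)`. -/
theorem szlenk_three_space {X : Type*} [NormedAddCommGroup X] [NormedSpace ℝ X]
    [CompleteSpace X] (Y : Submodule ℝ X) [hY : IsClosed (Y : Set X)] :
    (∀ ζ : Ordinal, SzSpGt Y ζ → SzSpGt X ζ) ∧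
    (∀ ζ : Ordinal, SzSpGt (X ⧸ Y) ζ → SzSpGt X ζ) ∧
    (∀ α β : Ordinal, SzSpLe (X ⧸ Y) α → SzSpLe Y β → SzSpLe X (α * β)) ∧
    (∀ ξ : Ordinal,
      (∃ γ < Ordinal.omega0 ^ Ordinal.omega0 ^ ξ, SzSpLe (X ⧸ Y) γ) →
      (∃ γ < Ordinal.omega0 ^ Ordinal.omega0 ^ ξ, SzSpLe Y γ) →
      ∃ γ < Ordinal.omega0 ^ Ordinal.omega0 ^ ξ, SzSpLe X γ) ∧
    (∀ ξ : Ordinal,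
      SzSpLe (X ⧸ Y) (Ordinal.omega0 ^ Ordinal.omega0 ^ ξ) →
      SzSpLe Y (Ordinal.omega0 ^ Ordinal.omega0 ^ ξ) →
      SzSpLe X (Ordinal.omega0 ^ Ordinal.omega0 ^ ξ)) := by
  refine ⟨?_, ?_, ?_, ?_, ?_⟩
  · -- subspace monotonicity
    rintro ζ ⟨ε, hε, hne⟩
    refine ⟨ε/2, by positivity, ?_⟩
    have h1 : derivIter (szSlice ε) (Metric.closedBall (0 : StrongDual ℝ Y) 1) ζ ⊆
        resDual Y '' derivIter (mSlice (resDual Y) (ε/2)) (Metric.closedBall 0 1) ζ := by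
      rw [← resDual_ball Y]
      have := surj_iter (resDual_wcont Y) (resDual_lip Y) (wcpt_closedBall 0 1)
        isBounded_closedBall (θ := ε/2) (by positivity) ζ
      rwa [show 2*(ε/2) = ε by ring] at this
    have h2 : derivIter (mSlice (resDual Y) (ε/2)) (Metric.closedBall (0 : StrongDual ℝ X) 1) ζ ⊆
        derivIter (szSlice (ε/2)) (Metric.closedBall (0 : StrongDual ℝ X) 1) ζ :=
      derivIter_le_general (szSlice_subset (ε/2))
        (fun A B hAB hBG => mSlice_le_szSlice le_rfl (resDual_lip Y)
          isBounded_closedBall hAB hBG) Set.Subset.rfl Set.Subset.rfl ζ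
    obtain ⟨y, hy⟩ := hne
    obtain ⟨f, hf, -⟩ := h1 hy
    exact ⟨f, h2 hf⟩
  · -- quotient monotonicity
    rintro ζ ⟨ε, hε, hne⟩
    refine ⟨ε, hε, ?_⟩
    have him := derivIter_image (coDual_wcont Y) (coDual_inj Y) one_pos (coDual_dist Y)
      (wcpt_closedBall (0 : StrongDual ℝ (X ⧸ Y)) 1) isBounded_closedBall ε ζ
    obtain ⟨g, hg⟩ := hne
    have hmem : coDual Y g ∈
        derivIter (szSlice (1*ε)) (coDual Y '' Metric.closedBall 0 1) ζ := by
      rw [him]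
      exact ⟨g, hg, rfl⟩
    rw [one_mul] at hmem
    have hsub : derivIter (szSlice ε) (coDual Y '' Metric.closedBall 0 1) ζ ⊆
        derivIter (szSlice ε) (Metric.closedBall (0 : StrongDual ℝ X) 1) ζ :=
      derivIter_le_general (szSlice_subset ε)
        (fun A B hAB hBG => szSlice_le le_rfl isBounded_closedBall hAB hBG)
        (coDual_ball_subset Y) Set.Subset.rfl ζ
    exact ⟨coDual Y g, hsub hmem⟩
  · -- three-space, product bound
    intro α β h1 h2 δ hδ
    exact lemmaQ Y δ hδ α β (h1 (δ/18) (by positivity)) (h2 (δ/6) (by positivity))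
  · -- three-space, strict
    rintro ξ ⟨γ₁, hγ₁, h1⟩ ⟨γ₂, hγ₂, h2⟩
    refine ⟨γ₁ * γ₂, Ordinal.principal_mul_omega0_opow_opow ξ hγ₁ hγ₂, ?_⟩
    intro δ hδ
    exact lemmaQ Y δ hδ γ₁ γ₂ (h1 (δ/18) (by positivity)) (h2 (δ/6) (by positivity))
  · -- three-space, non-strict
    intro ξ h1 h2 δ hδ
    have hΓlim : Order.IsSuccLimit (Ordinal.omega0 ^ Ordinal.omega0 ^ ξ) := by
      apply Ordinal.isSuccLimit_of_principal_mul _ (Ordinal.principal_mul_omega0_opow_opow ξ)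
      calc (2 : Ordinal) < Ordinal.omega0 := by
            exact_mod_cast Ordinal.nat_lt_omega0 2
      _ = Ordinal.omega0 ^ (1 : Ordinal) := (Ordinal.opow_one _).symm
      _ ≤ Ordinal.omega0 ^ Ordinal.omega0 ^ ξ := by
          apply Ordinal.opow_le_opow_right Ordinal.omega0_pos
          rw [Order.one_le_iff_pos]
          exact Ordinal.opow_pos _ Ordinal.omega0_pos
    obtain ⟨γZ, hγZ, hZe⟩ := exists_lt_of_derivIter_empty (wcpt_closedBall 0 1) hΓlim
      (h1 (δ/18) (by positivity))
    obtain ⟨γY, hγY, hYe⟩ := exists_lt_of_derivIter_empty (wcpt_closedBall 0 1) hΓlim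
      (h2 (δ/6) (by positivity))
    have hQ := lemmaQ Y δ hδ γZ γY hZe hYe
    exact Set.eq_empty_of_subset_empty ((derivIter_antitone (szSlice_subset δ) _
      (Ordinal.principal_mul_omega0_opow_opow ξ hγZ hγY).le).trans (by rw [hQ]))
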